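/- The function φ(x) := 3x²(π/3 − arccos(x/(1−x))) + 3x√(1−2x) is strictly increasing on [1/3, 1/2], with φ(1/3) = 1/√3. -/

import Mathlib

open Metric Set MeasureTheory Pointwise

/-- The minimal width of a planar set: the least length of its orthogonal
projection onto a direction. -/
noncomputable def minWidth (K : Set (EuclideanSpace ℝ (Fin 2))) : ℝ :=
  ⨅ θ : Metric.sphere (0 : EuclideanSpace ℝ (Fin 2)) 1,
    (sSup ((fun x => (inner ℝ x θ.1 : ℝ)) '' K) - sInf ((fun x => (inner ℝ x θ.1 : ℝ)) '' K))

/-- The inradius: radius of a largest disk contained in the set. -/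
noncomputable def inradius (K : Set (EuclideanSpace ℝ (Fin 2))) : ℝ :=
  sSup {r : ℝ | ∃ c, Metric.closedBall c r ⊆ K}

/-- The area of a planar set. -/
noncomputable def area (K : Set (EuclideanSpace ℝ (Fin 2))) : ℝ := (volume K).toReal

/-- A set is an equilateral triangle if it is the convex hull of three points at
equal positive pairwise distances. -/
def IsEquilateralTriangle (E : Set (EuclideanSpace ℝ (Fin 2))) : Prop :=
  ∃ a b c : EuclideanSpace ℝ (Fin 2), dist a b = dist b c ∧ dist b c = dist c a ∧
    0 < dist a b ∧ E = convexHull ℝ {a, b, c}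

/-- Hausdorff asymmetry from equilateral triangles of the same width. -/
noncomputable def hausdorffAsym (K : Set (EuclideanSpace ℝ (Fin 2))) : ℝ :=
  sInf {d : ℝ | ∃ E, IsEquilateralTriangle E ∧ minWidth E = minWidth K ∧
    d = Metric.hausdorffDist K E / minWidth E}

/-- Fraenkel asymmetry from equilateral triangles of the same width. -/
noncomputable def fraenkelAsym (K : Set (EuclideanSpace ℝ (Fin 2))) : ℝ :=
  sInf {d : ℝ | ∃ E, IsEquilateralTriangle E ∧ minWidth E = minWidth K ∧
    d = area (symmDiff K E) / (minWidth E)^2}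

/-- The point (x, y) of the Euclidean plane. -/
noncomputable def pt (x y : ℝ) : EuclideanSpace ℝ (Fin 2) :=
  (WithLp.equiv 2 (Fin 2 → ℝ)).symm ![x, y]

/-- The function φ of the paper. -/
noncomputable def phi (x : ℝ) : ℝ :=
  3 * x ^ 2 * (Real.pi / 3 - Real.arccos (x / (1 - x))) + 3 * x * Real.sqrt (1 - 2 * x)

/-- The function ψ of the paper. -/
noncomputable def psi (x y : ℝ) : ℝ :=
  Real.pi * x ^ 2 + 2 * x * Real.sqrt (1 - 2 * x) - 2 * x ^ 2 * Real.arccos (x / (1 - x))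
    + x * Real.sqrt (y ^ 2 - x ^ 2) - x ^ 2 * Real.arccos (x / y)

open Real in
lemma arccos_antitone' : Antitone Real.arccos := fun x y h =>
  sub_le_sub_left (Real.monotone_arcsin h) _

lemma arccos_half' : Real.arccos (1/2) = Real.pi / 3 := by
  rw [← Real.cos_pi_div_three]
  exact Real.arccos_cos (by positivity) (by linarith [Real.pi_pos])

lemma hasDerivAt_phi {x : ℝ} (hx : x ∈ Ioo (1/3 : ℝ) (1/2)) :
    HasDerivAt phi
      (6 * x * (Real.pi / 3 - Real.arccos (x / (1 - x)))
        + 3 * (1 - 2*x)^2 / ((1 - x) * Real.sqrt (1 - 2*x))) x := by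
  obtain ⟨h1, h2⟩ := hx
  have hx0 : (0:ℝ) < x := by linarith
  have h1x : (0:ℝ) < 1 - x := by linarith
  have h12 : (0:ℝ) < 1 - 2*x := by linarith
  have hs : Real.sqrt (1 - 2*x) > 0 := Real.sqrt_pos.2 h12
  have hssq : Real.sqrt (1 - 2*x) ^ 2 = 1 - 2*x := Real.sq_sqrt h12.le
  have hg : HasDerivAt (fun x : ℝ => x / (1 - x)) (1 / (1 - x)^2) x := by
    have := (hasDerivAt_id x).div ((hasDerivAt_id x).const_sub 1) h1x.ne'
    refine this.congr_deriv ?_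
    simp only [id]
    field_simp
    ring
  have hglt : x / (1 - x) < 1 := (div_lt_one h1x).2 (by linarith)
  have hgne1 : x / (1 - x) ≠ 1 := hglt.ne
  have hgpos : 0 < x / (1 - x) := by positivity
  have hgnem1 : x / (1 - x) ≠ -1 := by linarith
  have hsimp : Real.sqrt (1 - (x / (1-x))^2) = Real.sqrt (1 - 2*x) / (1 - x) := by
    rw [show 1 - (x / (1-x))^2 = (1 - 2*x) / (1-x)^2 by field_simp; ring,
      Real.sqrt_div h12.le, Real.sqrt_sq h1x.le]
  have harc : HasDerivAt (fun x : ℝ => Real.arccos (x / (1 - x)))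
      (-(1 / ((1 - x) * Real.sqrt (1 - 2*x)))) x := by
    have := (Real.hasDerivAt_arccos hgnem1 hgne1).comp x hg
    refine this.congr_deriv ?_
    rw [hsimp]
    field_simp
  have hsq : HasDerivAt (fun x : ℝ => Real.sqrt (1 - 2*x))
      (-(1 / Real.sqrt (1 - 2*x))) x := by
    have := (Real.hasDerivAt_sqrt h12.ne').comp x
      (((hasDerivAt_id x).const_mul 2).const_sub 1)
    refine this.congr_deriv ?_
    field_simp
  have H : HasDerivAt phi
      (6 * x * (Real.pi / 3 - Real.arccos (x / (1-x)))
        + 3 * x ^ 2 * (1 / ((1 - x) * Real.sqrt (1 - 2*x)))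
        + (3 * Real.sqrt (1 - 2*x) + 3 * x * (-(1 / Real.sqrt (1 - 2*x))))) x := by
    have hA : HasDerivAt (fun x : ℝ => 3 * x ^ 2 * (Real.pi / 3 - Real.arccos (x / (1 - x))))
        (6 * x * (Real.pi / 3 - Real.arccos (x / (1-x)))
          + 3 * x ^ 2 * (1 / ((1 - x) * Real.sqrt (1 - 2*x)))) x := by
      have hp : HasDerivAt (fun x : ℝ => 3 * x ^ 2) (6 * x) x := by
        have := ((hasDerivAt_pow 2 x).const_mul 3)
        refine this.congr_deriv ?_; ring
      have := hp.mul (harc.const_sub (Real.pi / 3))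
      refine this.congr_deriv ?_; ring
    have hB : HasDerivAt (fun x : ℝ => 3 * x * Real.sqrt (1 - 2*x))
        (3 * Real.sqrt (1 - 2*x) + 3 * x * (-(1 / Real.sqrt (1 - 2*x)))) x := by
      have hp : HasDerivAt (fun x : ℝ => 3 * x) 3 x := by
        simpa using (hasDerivAt_id x).const_mul 3
      exact hp.mul hsq
    have := hA.add hB
    exact this
  convert H using 1
  have e1 : 3 * Real.sqrt (1-2*x) = 3*(1-2*x)/Real.sqrt (1-2*x) := by
    rw [eq_div_iff hs.ne']; nlinarith [hssq]
  rw [e1]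
  field_simp
  ring

/-- The function φ is strictly increasing on [1/3, 1/2], with φ(1/3) = 1/√3. -/
theorem phi_strictMonoOn :
    StrictMonoOn phi (Set.Icc (1 / 3 : ℝ) (1 / 2)) ∧ phi (1 / 3) = 1 / Real.sqrt 3 := by
  constructor
  · apply strictMonoOn_of_deriv_pos (convex_Icc _ _)
    · apply ContinuousOn.add
      · apply ContinuousOn.mul (by fun_prop)
        apply ContinuousOn.sub continuousOn_const
        apply Real.continuous_arccos.comp_continuousOn
        apply ContinuousOn.div continuousOn_id (by fun_prop)
        intro x hx
        simp only [mem_Icc] at hx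
        intro h; linarith [hx.2]
      · fun_prop
    · intro x hx
      rw [interior_Icc] at hx
      rw [(hasDerivAt_phi hx).deriv]
      obtain ⟨h1, h2⟩ := hx
      have hx0 : (0:ℝ) < x := by linarith
      have h1x : (0:ℝ) < 1 - x := by linarith
      have h12 : (0:ℝ) < 1 - 2*x := by linarith
      have hs : (0:ℝ) < Real.sqrt (1 - 2*x) := Real.sqrt_pos.2 h12
      have harc : Real.arccos (x / (1-x)) ≤ Real.pi / 3 := by
        rw [← arccos_half']
        apply arccos_antitone'
        rw [le_div_iff₀ h1x]; linarith
      have t1 : 0 ≤ 6 * x * (Real.pi / 3 - Real.arccos (x / (1-x))) := by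
        apply mul_nonneg (by linarith); linarith
      have t2 : 0 < 3 * (1 - 2*x)^2 / ((1 - x) * Real.sqrt (1 - 2*x)) := by positivity
      linarith
  · have : Real.arccos ((1/3 : ℝ) / (1 - 1/3)) = Real.pi / 3 := by
      norm_num [arccos_half']
    simp only [phi, this]
    rw [show (1 : ℝ) - 2 * (1/3) = 1/3 by norm_num]
    rw [show (1:ℝ)/3 = (3:ℝ)⁻¹ by norm_num, Real.sqrt_inv]
    ring
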